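/- arXiv:2108.10578 — 5 statements merged into one kernel-verified Lean document; each statement's English description precedes it below -/
import Mathlib

section
/- The characteristic polynomial D(μ) = P_0(μ)Q_{l+1}(μ) − P_{l+1}(μ)Q_0(μ) of the discrete problem is a monic polynomial of degree l. -/
open Polynomial

noncomputable def psi : ℕ → Polynomial ℂ
  | 0 => 0
  | 1 => 1
  | (n + 2) => Polynomial.X * psi (n + 1) - psi n

noncomputable def Dpoly (l m : ℕ) (w : ℕ → ℂ) : Polynomial ℂ :=
  psi m * (psi (l - m + 2) +
      ∑ j ∈ Finset.Icc 1 (l - m + 1), Polynomial.C (w (l + 1 - j)) * psi j) +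
  psi (l - m + 1) *
    (-psi (m - 1) + ∑ j ∈ Finset.Icc 1 (m - 1), Polynomial.C (w j) * psi j)

lemma psi_deg_aux (n : ℕ) :
    (psi n).degree ≤ ((n - 1 : ℕ) : WithBot ℕ) ∧
    (psi (n + 1)).degree ≤ ((n : ℕ) : WithBot ℕ) := by
  induction n with
  | zero => simp [psi]
  | succ k ih =>
    refine ⟨by simpa using ih.2, ?_⟩
    show (psi (k + 2)).degree ≤ ((k + 1 : ℕ) : WithBot ℕ)
    rw [psi]
    refine (degree_sub_le _ _).trans (max_le ?_ ?_)
    · refine (degree_mul_le _ _).trans ?_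
      calc degree (X : Polynomial ℂ) + (psi (k + 1)).degree
          ≤ 1 + (k : WithBot ℕ) := add_le_add degree_X_le ih.2
        _ = ((k + 1 : ℕ) : WithBot ℕ) := by
            rw [← Nat.cast_one, ← Nat.cast_add, Nat.add_comm]
    · exact ih.1.trans (by exact_mod_cast (by omega : k - 1 ≤ k + 1))

lemma psi_degree_le (n : ℕ) : (psi n).degree ≤ ((n - 1 : ℕ) : WithBot ℕ) :=
  (psi_deg_aux n).1

lemma psi_monic (n : ℕ) :
    (psi (n + 1)).Monic ∧ (psi (n + 1)).natDegree = n := by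
  induction n with
  | zero => exact ⟨monic_one, by simp [psi]⟩
  | succ k ih =>
    have hXm : (X * psi (k + 1)).Monic := monic_X.mul ih.1
    have hXd : (X * psi (k + 1)).natDegree = k + 1 := by
      rw [natDegree_mul X_ne_zero ih.1.ne_zero, natDegree_X, ih.2, Nat.add_comm]
    have hdeg : (X * psi (k + 1)).degree = ((k + 1 : ℕ) : WithBot ℕ) := by
      rw [degree_eq_natDegree hXm.ne_zero, hXd]
    have hlt : (psi k).degree < (X * psi (k + 1)).degree := by
      rw [hdeg]
      exact lt_of_le_of_lt (psi_degree_le k) (by exact_mod_cast (by omega : k - 1 < k + 1))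
    constructor
    · show (psi (k + 2)).Monic
      rw [psi]; exact hXm.sub_of_left hlt
    · show (psi (k + 2)).natDegree = k + 1
      rw [psi, natDegree_eq_of_degree_eq (degree_sub_eq_left_of_degree_lt hlt), hXd]

lemma sum_degree_le (N : ℕ) (f : ℕ → ℂ) :
    (∑ j ∈ Finset.Icc 1 N, C (f j) * psi j).degree ≤ ((N - 1 : ℕ) : WithBot ℕ) := by
  refine (degree_sum_le _ _).trans (Finset.sup_le fun j hj => ?_)
  have hjN : j ≤ N := (Finset.mem_Icc.mp hj).2
  refine (degree_mul_le _ _).trans ?_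
  calc degree (C (f j)) + (psi j).degree
      ≤ 0 + ((j - 1 : ℕ) : WithBot ℕ) := add_le_add degree_C_le (psi_degree_le j)
    _ = ((j - 1 : ℕ) : WithBot ℕ) := zero_add _
    _ ≤ ((N - 1 : ℕ) : WithBot ℕ) := by exact_mod_cast (by omega : j - 1 ≤ N - 1)

theorem D_monic_degree (l m : ℕ) (hm : 1 ≤ m) (hml : m ≤ l) (w : ℕ → ℂ) :
    (Dpoly l m w).Monic ∧ (Dpoly l m w).natDegree = l := by
  set S1 := ∑ j ∈ Finset.Icc 1 (l - m + 1), C (w (l + 1 - j)) * psi j with hS1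
  set S2 := ∑ j ∈ Finset.Icc 1 (m - 1), C (w j) * psi j with hS2
  set M := psi m * psi (l - m + 2) with hMdef
  set R := psi m * S1 + psi (l - m + 1) * (-psi (m - 1) + S2) with hRdef
  have hsplit : Dpoly l m w = M + R := by
    rw [Dpoly, hMdef, hRdef]; ring
  -- M is monic of degree l
  have hm1 : (psi m).Monic ∧ (psi m).natDegree = m - 1 := by
    obtain ⟨k, rfl⟩ := Nat.exists_eq_add_of_le hm
    simpa [Nat.add_comm] using psi_monic k
  have hm2 : (psi (l - m + 2)).Monic ∧ (psi (l - m + 2)).natDegree = l - m + 1 :=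
    psi_monic (l - m + 1)
  have hMmonic : M.Monic := hm1.1.mul hm2.1
  have hMdeg : M.natDegree = l := by
    rw [hMdef, natDegree_mul hm1.1.ne_zero hm2.1.ne_zero, hm1.2, hm2.2]; omega
  have hMdegree : M.degree = (l : WithBot ℕ) := by
    rw [degree_eq_natDegree hMmonic.ne_zero, hMdeg]
  -- R has degree < l
  have hpm : (psi m).degree ≤ ((m - 1 : ℕ) : WithBot ℕ) := psi_degree_le m
  have hR1 : (psi m * S1).degree ≤ ((l - 1 : ℕ) : WithBot ℕ) := by
    refine (degree_mul_le _ _).trans ?_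
    calc (psi m).degree + S1.degree
        ≤ ((m - 1 : ℕ) : WithBot ℕ) + ((l - m + 1 - 1 : ℕ) : WithBot ℕ) :=
          add_le_add hpm (sum_degree_le _ _)
      _ = ((m - 1 + (l - m + 1 - 1) : ℕ) : WithBot ℕ) := by rw [Nat.cast_add]
      _ ≤ ((l - 1 : ℕ) : WithBot ℕ) := by
          exact_mod_cast (by omega : m - 1 + (l - m + 1 - 1) ≤ l - 1)
  have hR2 : (psi (l - m + 1) * (-psi (m - 1) + S2)).degree ≤ ((l - 1 : ℕ) : WithBot ℕ) := by
    refine (degree_mul_le _ _).trans ?_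
    have hinner : (-psi (m - 1) + S2).degree ≤ ((m - 1 - 1 : ℕ) : WithBot ℕ) := by
      refine (degree_add_le _ _).trans (max_le ?_ ?_)
      · rw [degree_neg]; exact psi_degree_le (m - 1)
      · exact sum_degree_le _ _
    calc (psi (l - m + 1)).degree + (-psi (m - 1) + S2).degree
        ≤ ((l - m + 1 - 1 : ℕ) : WithBot ℕ) + ((m - 1 - 1 : ℕ) : WithBot ℕ) :=
          add_le_add (psi_degree_le _) hinner
      _ = ((l - m + 1 - 1 + (m - 1 - 1) : ℕ) : WithBot ℕ) := by rw [Nat.cast_add]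
      _ ≤ ((l - 1 : ℕ) : WithBot ℕ) := by
          exact_mod_cast (by omega : l - m + 1 - 1 + (m - 1 - 1) ≤ l - 1)
  have hRlt : R.degree < M.degree := by
    rw [hMdegree]
    refine lt_of_le_of_lt ((degree_add_le _ _).trans (max_le hR1 hR2)) ?_
    exact_mod_cast (by omega : l - 1 < l)
  constructor
  · rw [hsplit]; exact hMmonic.add_of_left hRlt
  · rw [hsplit, natDegree_add_eq_left_of_degree_lt hRlt, hMdeg]
end

section
/- Suppose gcd(m, l+1) = d > 1 and set r = (l+1)/d. Then for each k = 1,…,d−1, the number 2cos(πk/d) is a root of D(μ), regardless of the values w_1,…,w_l. Consequently the numbers 4sin²(πk/(2d))/h², with h = π/(l+1), are eigenvalues of the finite-difference problem −(y_{j+1}−2y_j+y_{j−1})/h² + q_j y_m = λ y_j, y_0 = y_{l+1} = 0, for any choice of q_1,…,q_l. -/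
open Polynomial Real

lemma sin_step (a θ : ℝ) :
    Real.sin (a + θ) + Real.sin (a - θ) = 2 * Real.cos θ * Real.sin a := by
  rw [Real.sin_add, Real.sin_sub]; ring

lemma psi_eval (θ : ℝ) (n : ℕ) :
    ((Real.sin θ : ℝ) : ℂ) * (psi n).eval ((2 * Real.cos θ : ℝ) : ℂ)
      = ((Real.sin (n * θ) : ℝ) : ℂ) := by
  induction n using Nat.strong_induction_on with
  | _ n ih =>
    match n with
    | 0 => simp [psi]
    | 1 => simp [psi]
    | (n + 2) =>
      have h1 := ih (n + 1) (by omega)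
      have h0 := ih n (by omega)
      have key : Real.sin (((n : ℝ) + 2) * θ)
          = 2 * Real.cos θ * Real.sin (((n : ℝ) + 1) * θ) - Real.sin ((n : ℝ) * θ) := by
        have h := sin_step (((n : ℝ) + 1) * θ) θ
        rw [show ((n : ℝ) + 1) * θ + θ = ((n : ℝ) + 2) * θ by ring,
          show ((n : ℝ) + 1) * θ - θ = (n : ℝ) * θ by ring] at h
        linarith
      rw [show (((n : ℕ) + 2 : ℕ) : ℝ) = (n : ℝ) + 2 by push_cast; ring, key,
        Complex.ofReal_sub, Complex.ofReal_mul, Complex.ofReal_mul, Complex.ofReal_ofNat]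
      rw [show (((n : ℕ) + 1 : ℕ) : ℝ) = (n : ℝ) + 1 by push_cast; ring] at h1
      have hmu : ((2 * Real.cos θ : ℝ) : ℂ) = 2 * ((Real.cos θ : ℝ) : ℂ) := by
        rw [Complex.ofReal_mul, Complex.ofReal_ofNat]
      simp only [psi, eval_sub, eval_mul, eval_X]
      rw [hmu] at h1 h0 ⊢
      linear_combination (2 * ((Real.cos θ : ℝ) : ℂ)) * h1 - h0

theorem degenerate_eigenvalues (l m d : ℕ) (hm : 1 ≤ m) (hml : m ≤ l)
    (hd : Nat.gcd m (l + 1) = d) (hd1 : 1 < d) :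
    ∀ k, 1 ≤ k → k ≤ d - 1 →
      (∀ w : ℕ → ℂ,
        (Dpoly l m w).eval ((2 * Real.cos (Real.pi * k / d) : ℝ) : ℂ) = 0) ∧
      (∀ q : ℕ → ℂ,
        ∃ y : ℕ → ℂ, (∃ j ≤ l + 1, y j ≠ 0) ∧ y 0 = 0 ∧ y (l + 1) = 0 ∧
          ∀ j, 1 ≤ j → j ≤ l →
            -((y (j + 1) - 2 * y j + y (j - 1)) / ((Real.pi / (l + 1) : ℝ) : ℂ) ^ 2)
              + q j * y m =
            ((4 * Real.sin (Real.pi * k / (2 * d)) ^ 2 / (Real.pi / (l + 1)) ^ 2 : ℝ) : ℂ)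
              * y j) := by
  intro k hk1 hk2
  have hd0 : 0 < d := by omega
  have hdm : d ∣ m := hd ▸ Nat.gcd_dvd_left m (l + 1)
  have hdl : d ∣ (l + 1) := hd ▸ Nat.gcd_dvd_right m (l + 1)
  set θ : ℝ := Real.pi * k / d with hθ
  have hθpos : 0 < θ := by
    apply div_pos (mul_pos Real.pi_pos _) (by exact_mod_cast hd0)
    exact_mod_cast hk1
  have hθlt : θ < Real.pi := by
    rw [hθ, div_lt_iff₀ (by exact_mod_cast hd0)]
    have : (k : ℝ) < d := by exact_mod_cast (by omega : k < d)
    nlinarith [Real.pi_pos]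
  have hsθ : Real.sin θ ≠ 0 := ne_of_gt (Real.sin_pos_of_pos_of_lt_pi hθpos hθlt)
  have sin_vanish : ∀ n : ℕ, d ∣ n → Real.sin (n * θ) = 0 := by
    rintro _ ⟨t, rfl⟩
    have hdR : (d : ℝ) ≠ 0 := by positivity
    have : ((d * t : ℕ) : ℝ) * θ = (t * k : ℕ) * Real.pi := by
      rw [hθ]
      push_cast
      field_simp
    rw [this, Real.sin_nat_mul_pi]
  have psi_zero : ∀ n : ℕ, d ∣ n →
      (psi n).eval ((2 * Real.cos θ : ℝ) : ℂ) = 0 := by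
    intro n hn
    have h := psi_eval θ n
    rw [sin_vanish n hn, Complex.ofReal_zero] at h
    exact (mul_eq_zero.mp h).resolve_left (by exact_mod_cast hsθ)
  constructor
  · intro w
    have h1 : d ∣ (l - m + 1) := by
      have : l - m + 1 = (l + 1) - m := by omega
      rw [this]
      exact Nat.dvd_sub hdl hdm
    rw [Dpoly, eval_add, eval_mul, eval_mul, psi_zero m hdm, psi_zero _ h1]
    ring
  · intro q
    refine ⟨fun j => ((Real.sin (j * θ) : ℝ) : ℂ), ⟨1, by omega, ?_⟩, by simp, ?_, ?_⟩
    · simp only [Nat.cast_one, one_mul]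
      exact_mod_cast hsθ
    · beta_reduce
      rw [sin_vanish (l + 1) hdl, Complex.ofReal_zero]
    · intro j hj1 hjl
      beta_reduce
      rw [sin_vanish m hdm, Complex.ofReal_zero, mul_zero, add_zero]
      have hcast : (((j - 1 : ℕ) : ℝ)) = (j : ℝ) - 1 := by
        have : (1 : ℕ) ≤ j := hj1
        push_cast [this]
        ring
      have key : Real.sin (((j : ℝ) + 1) * θ) + Real.sin (((j : ℝ) - 1) * θ)
          = 2 * Real.cos θ * Real.sin ((j : ℝ) * θ) := by
        have h := sin_step ((j : ℝ) * θ) θ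
        rw [show (j : ℝ) * θ + θ = ((j : ℝ) + 1) * θ by ring,
          show (j : ℝ) * θ - θ = ((j : ℝ) - 1) * θ by ring] at h
        exact h
      have hcos : 4 * Real.sin (Real.pi * k / (2 * d)) ^ 2 = 2 - 2 * Real.cos θ := by
        have e : Real.pi * k / (2 * d) = θ / 2 := by rw [hθ]; ring
        have h2 : Real.cos (2 * (θ / 2)) = Real.cos (θ / 2) ^ 2 - Real.sin (θ / 2) ^ 2 :=
          Real.cos_two_mul' (θ / 2)
        have h3 := Real.sin_sq_add_cos_sq (θ / 2)
        rw [e]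
        rw [show 2 * (θ / 2) = θ by ring] at h2
        nlinarith
      rw [show (((j : ℕ) + 1 : ℕ) : ℝ) = (j : ℝ) + 1 by push_cast; ring, hcast]
      have hr0 : (Real.pi / (l + 1) : ℝ) ≠ 0 := by
        apply div_ne_zero Real.pi_ne_zero
        positivity
      have hreal : -((Real.sin (((j : ℝ) + 1) * θ) - 2 * Real.sin ((j : ℝ) * θ)
            + Real.sin (((j : ℝ) - 1) * θ)) / (Real.pi / (l + 1)) ^ 2)
          = (4 * Real.sin (Real.pi * k / (2 * d)) ^ 2 / (Real.pi / (l + 1)) ^ 2)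
            * Real.sin ((j : ℝ) * θ) := by
        rw [hcos]
        rw [show Real.sin (((j : ℝ) + 1) * θ) - 2 * Real.sin ((j : ℝ) * θ)
            + Real.sin (((j : ℝ) - 1) * θ) = -((2 - 2 * Real.cos θ) * Real.sin ((j : ℝ) * θ)) by
          linear_combination key]
        ring
      have hC := congrArg (fun x : ℝ => (x : ℂ)) hreal
      push_cast at hC ⊢
      linear_combination hC
end

section
/- Suppose gcd(m, l+1) = 1 (with 1 ≤ m ≤ l). If two coefficient vectors (w_1,…,w_l) and (w̃_1,…,w̃_l) produce the same characteristic polynomial D(μ) = D̃(μ), then w_j = w̃_j for all j = 1,…,l. -/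
open Polynomial

lemma psi_def (n : ℕ) : psi (n + 2) = Polynomial.X * psi (n + 1) - psi n := by
  rfl

lemma psi_add : ∀ (n m : ℕ), psi (m + n + 1) = psi (m + 1) * psi (n + 1) - psi m * psi n
  | 0, m => by simp [psi]
  | 1, m => by
    rw [show m + 1 + 1 = m + 2 from rfl, psi_def]
    simp [psi]; ring
  | (n + 2), m => by
    have h1 := psi_add n m
    have h2 := psi_add (n + 1) m
    have e1 : psi (m + (n + 2) + 1) = Polynomial.X * psi (m + (n + 1) + 1) - psi (m + n + 1) := by
      rw [show m + (n + 2) + 1 = (m + n + 1) + 2 from by ring, psi_def]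
      ring_nf
    simp only [show n + 1 + 1 = n + 2 from rfl] at h2
    have e2 : psi (n + 2 + 1) = Polynomial.X * psi (n + 2) - psi (n + 1) := psi_def (n + 1)
    have e3 : psi (n + 2) = Polynomial.X * psi (n + 1) - psi n := psi_def n
    linear_combination e1 + Polynomial.X * h2 - h1 - psi (m + 1) * e2 + psi m * e3

lemma psi_cassini : ∀ n : ℕ, psi (n + 1) * psi (n + 1) - psi (n + 2) * psi n = 1
  | 0 => by simp [psi]
  | (n + 1) => by
    have ih := psi_cassini n
    rw [show n + 1 + 2 = (n + 1) + 2 from rfl, psi_def (n + 1), psi_def n] at *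
    linear_combination ih

lemma psi_monic_natDegree : ∀ n : ℕ, (psi (n + 1)).Monic ∧ (psi (n + 1)).natDegree = n
  | 0 => by simp [psi]
  | 1 => by
    rw [psi_def 0]
    simp [psi]
  | (n + 2) => by
    have ih := psi_monic_natDegree (n + 1)
    have ih0 := psi_monic_natDegree n
    rw [psi_def (n + 1)]
    have hmon : (Polynomial.X * psi (n + 2)).Monic := (monic_X.mul ih.1)
    have hd : (Polynomial.X * psi (n + 2)).natDegree = n + 2 := by
      rw [natDegree_mul X_ne_zero ih.1.ne_zero, natDegree_X, ih.2]; omega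
    have hlt : (-psi (n + 1)).degree < (Polynomial.X * psi (n + 2)).degree := by
      rw [degree_neg, Polynomial.degree_eq_natDegree ih0.1.ne_zero,
        Polynomial.degree_eq_natDegree hmon.ne_zero, hd, ih0.2]
      exact_mod_cast Nat.lt_succ_of_lt (Nat.lt_succ_self n)
    constructor
    · rw [sub_eq_add_neg]; exact hmon.add_of_left hlt
    · rw [sub_eq_add_neg,
        natDegree_eq_of_degree_eq (degree_add_eq_left_of_degree_lt hlt), hd]

lemma psi_natDegree_le (j : ℕ) : (psi j).natDegree ≤ j - 1 := by
  cases j with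
  | zero => simp [psi]
  | succ n => exact le_of_eq (psi_monic_natDegree n).2

lemma psi_coprime_succ (n : ℕ) : IsCoprime (psi n) (psi (n + 1)) := by
  cases n with
  | zero => simp [psi, isCoprime_zero_left]
  | succ k =>
    refine ⟨-psi (k + 3), psi (k + 2), ?_⟩
    have hc := psi_cassini (k + 1)
    rw [show k + 1 + 1 = k + 2 from rfl, show k + 1 + 2 = k + 3 from rfl] at hc
    rw [show k + 1 + 1 = k + 2 from rfl]
    linear_combination hc

lemma psi_coprime_aux : ∀ N a b : ℕ, a + b ≤ N → Nat.Coprime a b →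
    IsCoprime (psi a) (psi b) := by
  intro N
  induction N with
  | zero =>
    intro a b hab hco
    have : a = 0 ∧ b = 0 := by omega
    simp_all [Nat.Coprime]
  | succ N ih =>
    intro a b hab hco
    rcases Nat.eq_zero_or_pos a with rfl | ha
    · have : b = 1 := by simpa [Nat.Coprime] using hco
      subst this; simp [psi, isCoprime_zero_left]
    rcases Nat.eq_zero_or_pos b with rfl | hb
    · have : a = 1 := by simpa [Nat.Coprime] using hco
      subst this; simp [psi, isCoprime_zero_right]
    rcases lt_trichotomy a b with h | rfl | h
    · -- a < b : write b = a + c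
      set c := b - a with hc
      have hc1 : 1 ≤ c := by omega
      have hbc : b = a + c := by omega
      have hco' : Nat.Coprime a c := by
        exact (Nat.coprime_sub_self_right (by omega : a ≤ b)).mpr hco
      have ihc : IsCoprime (psi a) (psi c) := ih a c (by omega) hco'
      have key : psi b = psi (a + 1) * psi c + psi a * (-(psi (c - 1))) := by
        have := psi_add (c - 1) a
        rw [show a + (c - 1) + 1 = b from by omega, show c - 1 + 1 = c from by omega] at this
        rw [this]; ring
      rw [key]
      exact ((psi_coprime_succ a).mul_right ihc).add_mul_left_right _
    · have : a = 1 := by simpa [Nat.Coprime] using hco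
      subst this
      simp [psi, isCoprime_one_left]
    · -- b < a : symmetric
      set c := a - b with hc
      have hbc : a = b + c := by omega
      have hco' : Nat.Coprime b c := by
        exact (Nat.coprime_sub_self_right (by omega : b ≤ a)).mpr hco.symm
      have ihc : IsCoprime (psi b) (psi c) := ih b c (by omega) hco'
      have key : psi a = psi (b + 1) * psi c + psi b * (-(psi (c - 1))) := by
        have := psi_add (c - 1) b
        rw [show b + (c - 1) + 1 = a from by omega, show c - 1 + 1 = c from by omega] at this
        rw [this]; ring
      rw [key]
      exact (((psi_coprime_succ b).mul_right ihc).add_mul_left_right _).symm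

lemma psi_coprime {a b : ℕ} (h : Nat.Coprime a b) : IsCoprime (psi a) (psi b) :=
  psi_coprime_aux (a + b) a b le_rfl h

lemma psi_sum_indep : ∀ (N : ℕ) (c : ℕ → ℂ),
    (∑ j ∈ Finset.Icc 1 N, Polynomial.C (c j) * psi j) = 0 →
    ∀ j ∈ Finset.Icc 1 N, c j = 0 := by
  intro N
  induction N with
  | zero => intro c h j hj; simp at hj
  | succ N ih =>
    intro c h j hj
    have hsplit : Finset.Icc 1 (N + 1) = insert (N + 1) (Finset.Icc 1 N) := by
      rw [Finset.insert_Icc_right_eq_Icc_add_one (by omega)]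
    rw [hsplit, Finset.sum_insert (by simp)] at h
    have htop : c (N + 1) = 0 := by
      have hpc : (psi (N + 1)).coeff N = 1 := by
        have hmn := psi_monic_natDegree N
        have := hmn.1.coeff_natDegree
        rwa [hmn.2] at this
      have := congrArg (fun p => Polynomial.coeff p N) h
      simp only [coeff_add, coeff_zero] at this
      rw [Polynomial.coeff_C_mul, hpc, Polynomial.finset_sum_coeff] at this
      have hz : ∀ i ∈ Finset.Icc 1 N, Polynomial.coeff (Polynomial.C (c i) * psi i) N = 0 := by
        intro i hi
        simp only [Finset.mem_Icc] at hi
        rw [Polynomial.coeff_C_mul, Polynomial.coeff_eq_zero_of_natDegree_lt, mul_zero]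
        exact lt_of_le_of_lt (psi_natDegree_le i) (by omega)
      rw [Finset.sum_eq_zero hz] at this
      simpa using this
    rcases Finset.mem_Icc.mp hj with ⟨hj1, hj2⟩
    rcases Nat.lt_or_ge j (N + 1) with hlt | hge
    · apply ih c ?_ j (Finset.mem_Icc.mpr ⟨hj1, by omega⟩)
      rw [htop] at h
      simpa using h
    · have : j = N + 1 := by omega
      rw [this]; exact htop

theorem uniqueness_nondegenerate (l m : ℕ) (hm : 1 ≤ m) (hml : m ≤ l)
    (hgcd : Nat.gcd m (l + 1) = 1) (w wt : ℕ → ℂ)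
    (hD : Dpoly l m w = Dpoly l m wt) :
    ∀ j, 1 ≤ j → j ≤ l → w j = wt j := by
  set P : Polynomial ℂ :=
    ∑ j ∈ Finset.Icc 1 (l - m + 1),
      Polynomial.C ((fun i => w (l + 1 - i) - wt (l + 1 - i)) j) * psi j with hPdef
  set Q : Polynomial ℂ :=
    ∑ j ∈ Finset.Icc 1 (m - 1),
      Polynomial.C ((fun i => w i - wt i) j) * psi j with hQdef
  have hPd : P = (∑ j ∈ Finset.Icc 1 (l - m + 1), Polynomial.C (w (l + 1 - j)) * psi j)
      - ∑ j ∈ Finset.Icc 1 (l - m + 1), Polynomial.C (wt (l + 1 - j)) * psi j := by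
    rw [hPdef, ← Finset.sum_sub_distrib]
    exact Finset.sum_congr rfl fun j _ => by rw [map_sub, sub_mul]
  have hQd : Q = (∑ j ∈ Finset.Icc 1 (m - 1), Polynomial.C (w j) * psi j)
      - ∑ j ∈ Finset.Icc 1 (m - 1), Polynomial.C (wt j) * psi j := by
    rw [hQdef, ← Finset.sum_sub_distrib]
    exact Finset.sum_congr rfl fun j _ => by rw [map_sub, sub_mul]
  have key : psi m * P + psi (l - m + 1) * Q = 0 := by
    unfold Dpoly at hD
    rw [hPd, hQd]
    linear_combination hD
  -- degree and nonvanishing facts for psi m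
  have hmfacts := psi_monic_natDegree (m - 1)
  rw [show m - 1 + 1 = m from by omega] at hmfacts
  have hmne : psi m ≠ 0 := hmfacts.1.ne_zero
  -- coprimality
  have hco : Nat.Coprime m (l - m + 1) := by
    rw [show l - m + 1 = (l + 1) - m from by omega]
    exact (Nat.coprime_sub_self_right (by omega)).mpr hgcd
  have hcop : IsCoprime (psi m) (psi (l - m + 1)) := psi_coprime hco
  -- Q = 0
  have hQ0 : Q = 0 := by
    rcases Nat.lt_or_ge m 2 with h2 | h2
    · have : m - 1 = 0 := by omega
      rw [hQdef, this]
      simp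
    · by_contra hne
      have hdvd : psi m ∣ psi (l - m + 1) * Q :=
        ⟨-P, by linear_combination key⟩
      have hdvdQ : psi m ∣ Q := hcop.dvd_of_dvd_mul_left hdvd
      have h1 : (psi m).natDegree ≤ Q.natDegree :=
        Polynomial.natDegree_le_of_dvd hdvdQ hne
      have h2' : Q.natDegree ≤ m - 2 := by
        rw [hQdef]
        apply Polynomial.natDegree_sum_le_of_forall_le
        intro i hi
        simp only [Finset.mem_Icc] at hi
        exact (Polynomial.natDegree_C_mul_le _ _).trans
          ((psi_natDegree_le i).trans (by omega))
      omega
  have hP0 : P = 0 := by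
    rw [hQ0, mul_zero, add_zero, mul_eq_zero] at key
    exact key.resolve_left hmne
  intro j hj1 hjl
  rcases Nat.lt_or_ge j m with hlt | hge
  · have hz := psi_sum_indep (m - 1) (fun i => w i - wt i) (hQdef.symm.trans hQ0) j
      (Finset.mem_Icc.mpr ⟨hj1, by omega⟩)
    exact sub_eq_zero.mp hz
  · have hz := psi_sum_indep (l - m + 1) (fun i => w (l + 1 - i) - wt (l + 1 - i))
      (hPdef.symm.trans hP0) (l + 1 - j)
      (Finset.mem_Icc.mpr ⟨by omega, by omega⟩)
    simp only [show l + 1 - (l + 1 - j) = j from by omega] at hz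
    exact sub_eq_zero.mp hz
end

section
/- Let l = 2m−1. Then D(μ) = ψ_m(μ)·(Q_0(μ) + Q_{l+1}(μ)), where Q_0(μ)+Q_{l+1}(μ) = ψ_{m+1}(μ) − ψ_{m−1}(μ) + w_m ψ_m(μ) + Σ_{j=1}^{m−1}(w_j + w_{l+1−j})ψ_j(μ). -/
open Polynomial

theorem D_factorization_middle (l m : ℕ) (hm : 1 ≤ m) (hl : l = 2 * m - 1)
    (w : ℕ → ℂ) :
    Dpoly l m w = psi m *
      (psi (m + 1) - psi (m - 1) + Polynomial.C (w m) * psi m +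
        ∑ j ∈ Finset.Icc 1 (m - 1), Polynomial.C (w j + w (l + 1 - j)) * psi j) := by
  subst hl
  obtain ⟨k, rfl⟩ : ∃ k, m = k + 1 := ⟨m - 1, (Nat.succ_pred_eq_of_pos hm).symm⟩
  unfold Dpoly
  simp only [show 2 * (k + 1) - 1 - (k + 1) + 2 = k + 2 by omega,
    show 2 * (k + 1) - 1 - (k + 1) + 1 = k + 1 by omega,
    show k + 1 - 1 = k by omega,
    show 2 * (k + 1) - 1 + 1 = 2 * k + 2 by omega]
  rw [Finset.sum_Icc_succ_top (by omega : 1 ≤ k + 1)]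
  simp only [show 2 * k + 2 - (k + 1) = k + 1 by omega]
  have hsum : ∑ j ∈ Finset.Icc 1 k, Polynomial.C (w j + w (2 * k + 2 - j)) * psi j
      = ∑ j ∈ Finset.Icc 1 k, (Polynomial.C (w j) * psi j
        + Polynomial.C (w (2 * k + 2 - j)) * psi j) := by
    refine Finset.sum_congr rfl fun j _ => ?_
    rw [Polynomial.C_add, add_mul]
  rw [hsum, Finset.sum_add_distrib]
  ring
end

section
/- Let l = 2m−1 and suppose both coefficient vectors are symmetric: w_j = w_{l+1−j} and w̃_j = w̃_{l+1−j} for j = 1,…,m−1. If D = D̃, then w_j = w̃_j for all j = 1,…,l. -/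
open Polynomial

lemma psi_spec : ∀ n : ℕ, (psi (n+1)).Monic ∧ (psi (n+1)).natDegree = n
  | 0 => by
      constructor
      · show (psi 1).Monic
        rw [psi]; exact monic_one
      · show (psi 1).natDegree = 0
        rw [psi]; simp
  | 1 => by
      have h : psi 2 = Polynomial.X := by
        show psi (0+2) = Polynomial.X
        rw [psi, psi, psi]; ring
      rw [h]; exact ⟨monic_X, natDegree_X⟩
  | (n+2) => by
      obtain ⟨hm1, hd1⟩ := psi_spec (n+1)
      obtain ⟨hm0, hd0⟩ := psi_spec n
      have hrec : psi (n+3) = Polynomial.X * psi (n+2) - psi (n+1) := by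
        show psi (n+1+2) = _
        rw [psi]
      have hmonic : (Polynomial.X * psi (n+2)).Monic := monic_X.mul hm1
      have hdeg : (Polynomial.X * psi (n+2)).natDegree = n + 2 := by
        rw [natDegree_X_mul hm1.ne_zero, hd1]
      have hlt : (psi (n+1)).degree < (Polynomial.X * psi (n+2)).degree := by
        apply Polynomial.degree_lt_degree
        rw [hdeg, hd0]; omega
      constructor
      · rw [hrec]; exact hmonic.sub_of_left hlt
      · rw [hrec, Polynomial.natDegree_sub_eq_left_of_natDegree_lt, hdeg]
        rw [hdeg, hd0]; omega

lemma psi_monic_s14 {n : ℕ} (h : 1 ≤ n) : (psi n).Monic := by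
  obtain ⟨k, rfl⟩ : ∃ k, n = k + 1 := ⟨n - 1, by omega⟩
  exact (psi_spec k).1

lemma psi_coeff_eq (k N : ℕ) (h : k ≤ N) :
    (psi (k+1)).coeff N = if N = k then 1 else 0 := by
  obtain ⟨hmo, hdeg⟩ := psi_spec k
  split_ifs with hNk
  · have hco := hmo.coeff_natDegree
    rw [hdeg] at hco
    rw [hNk]; exact hco
  · apply Polynomial.coeff_eq_zero_of_natDegree_lt
    rw [hdeg]; omega

lemma sum_psi_zero (N : ℕ) (c : ℕ → ℂ)
    (h : ∑ j ∈ Finset.Icc 1 N, Polynomial.C (c j) * psi j = 0) :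
    ∀ j ∈ Finset.Icc 1 N, c j = 0 := by
  induction N with
  | zero => simp
  | succ N ih =>
    have hcoeff : (∑ j ∈ Finset.Icc 1 (N+1), Polynomial.C (c j) * psi j).coeff N
        = c (N+1) := by
      rw [Polynomial.finset_sum_coeff]
      have : ∀ j ∈ Finset.Icc 1 (N+1),
          (Polynomial.C (c j) * psi j).coeff N = if j = N+1 then c j else 0 := by
        intro j hj
        simp only [Finset.mem_Icc] at hj
        obtain ⟨k, rfl⟩ : ∃ k, j = k + 1 := ⟨j - 1, by omega⟩
        rw [Polynomial.coeff_C_mul, psi_coeff_eq k N (by omega)]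
        by_cases hk : N = k
        · subst hk; simp
        · rw [if_neg hk, if_neg (by omega)]; ring
      rw [Finset.sum_congr rfl this, Finset.sum_ite_eq' (Finset.Icc 1 (N+1)) (N+1) c]
      simp
    rw [h] at hcoeff
    have hcN : c (N+1) = 0 := by simpa using hcoeff.symm
    have hins : Finset.Icc 1 (N+1) = insert (N+1) (Finset.Icc 1 N) := by
      ext x; simp [Finset.mem_Icc]; omega
    have hnotmem : N+1 ∉ Finset.Icc 1 N := by simp
    rw [hins, Finset.sum_insert hnotmem, hcN] at h
    simp only [map_zero, zero_mul, zero_add] at h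
    intro j hj
    rw [hins, Finset.mem_insert] at hj
    rcases hj with rfl | hj
    · exact hcN
    · exact ih h j hj

theorem uniqueness_symmetric (l m : ℕ) (hm : 1 ≤ m) (hl : l = 2 * m - 1)
    (w wt : ℕ → ℂ)
    (hsym : ∀ j, 1 ≤ j → j ≤ m - 1 → w j = w (l + 1 - j))
    (hsymt : ∀ j, 1 ≤ j → j ≤ m - 1 → wt j = wt (l + 1 - j))
    (hD : Dpoly l m w = Dpoly l m wt) :
    ∀ j, 1 ≤ j → j ≤ l → w j = wt j := by
  subst hl
  have h1 : 2*m - 1 - m + 2 = m + 1 := by omega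
  have h2 : 2*m - 1 - m + 1 = m := by omega
  simp only [Dpoly, h1, h2] at hD
  rw [← mul_add, ← mul_add] at hD
  have hne : psi m ≠ 0 := (psi_monic_s14 hm).ne_zero
  have hcancel := mul_left_cancel₀ hne hD
  -- extract equality of the sums
  have heq : (∑ j ∈ Finset.Icc 1 m, Polynomial.C (w (2*m - 1 + 1 - j)) * psi j)
      + (∑ j ∈ Finset.Icc 1 (m-1), Polynomial.C (w j) * psi j)
      = (∑ j ∈ Finset.Icc 1 m, Polynomial.C (wt (2*m - 1 + 1 - j)) * psi j)
      + (∑ j ∈ Finset.Icc 1 (m-1), Polynomial.C (wt j) * psi j) := by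
    linear_combination hcancel
  -- split off the top term j = m in the first sums
  have hins : Finset.Icc 1 m = insert m (Finset.Icc 1 (m-1)) := by
    ext x; simp [Finset.mem_Icc]; omega
  have hnotmem : m ∉ Finset.Icc 1 (m-1) := by simp [Finset.mem_Icc]; omega
  have htop : 2*m - 1 + 1 - m = m := by omega
  have hS1w : (∑ j ∈ Finset.Icc 1 m, Polynomial.C (w (2*m - 1 + 1 - j)) * psi j)
      = Polynomial.C (w m) * psi m
        + ∑ j ∈ Finset.Icc 1 (m-1), Polynomial.C (w j) * psi j := by
    rw [hins, Finset.sum_insert hnotmem, htop]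
    congr 1
    apply Finset.sum_congr rfl
    intro j hj
    simp only [Finset.mem_Icc] at hj
    rw [← hsym j hj.1 hj.2]
  have hS1wt : (∑ j ∈ Finset.Icc 1 m, Polynomial.C (wt (2*m - 1 + 1 - j)) * psi j)
      = Polynomial.C (wt m) * psi m
        + ∑ j ∈ Finset.Icc 1 (m-1), Polynomial.C (wt j) * psi j := by
    rw [hins, Finset.sum_insert hnotmem, htop]
    congr 1
    apply Finset.sum_congr rfl
    intro j hj
    simp only [Finset.mem_Icc] at hj
    rw [← hsymt j hj.1 hj.2]
  rw [hS1w, hS1wt] at heq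
  -- combined coefficient function
  set c : ℕ → ℂ := fun j => if j = m then w m - wt m else 2*(w j - wt j) with hc
  have hsum : ∑ j ∈ Finset.Icc 1 m, Polynomial.C (c j) * psi j = 0 := by
    rw [hins, Finset.sum_insert hnotmem]
    have hcm : c m = w m - wt m := by simp [hc]
    have hrest : ∑ j ∈ Finset.Icc 1 (m-1), Polynomial.C (c j) * psi j
        = 2 * (∑ j ∈ Finset.Icc 1 (m-1), Polynomial.C (w j) * psi j)
          - 2 * (∑ j ∈ Finset.Icc 1 (m-1), Polynomial.C (wt j) * psi j) := by
      rw [Finset.mul_sum, Finset.mul_sum, ← Finset.sum_sub_distrib]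
      apply Finset.sum_congr rfl
      intro j hj
      simp only [Finset.mem_Icc] at hj
      have hjm : j ≠ m := by omega
      rw [hc]; simp only [if_neg hjm]
      simp only [map_mul, map_sub, map_ofNat]
      ring
    rw [hcm, hrest]
    rw [map_sub]
    linear_combination heq
  have hzero := sum_psi_zero m c hsum
  -- conclude
  have hle : ∀ j, 1 ≤ j → j ≤ m → w j = wt j := by
    intro j hj1 hjm
    have hz := hzero j (Finset.mem_Icc.mpr ⟨hj1, hjm⟩)
    by_cases hjm' : j = m
    · subst hjm'
      simp only [hc, if_pos rfl] at hz
      exact sub_eq_zero.mp hz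
    · simp only [hc, if_neg hjm'] at hz
      rcases mul_eq_zero.mp hz with h | h
      · norm_num at h
      · exact sub_eq_zero.mp h
  intro j hj1 hjl
  by_cases hjm : j ≤ m
  · exact hle j hj1 hjm
  · have hj' : 1 ≤ 2*m - 1 + 1 - j ∧ 2*m - 1 + 1 - j ≤ m - 1 := by omega
    have hback : 2*m - 1 + 1 - (2*m - 1 + 1 - j) = j := by omega
    have hw := hsym (2*m - 1 + 1 - j) hj'.1 hj'.2
    have hwt := hsymt (2*m - 1 + 1 - j) hj'.1 hj'.2
    rw [hback] at hw hwt
    rw [← hw, ← hwt]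
    exact hle _ hj'.1 (by omega)
end
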